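/- Let A ∈ ℝ^{d×d} be Hurwitz (hence invertible), let Σ_Δ ∈ ℝ^{d×d} be symmetric positive semi-definite, and for ε ∈ (0, λ_min(AᵀA)) let G_ε = −(εI + AᵀA)⁻¹Aᵀ and let Σ^ε be the unique solution of the Lyapunov equation (½I + G_εA)Σ^ε + Σ^ε(½I + G_εA)ᵀ + G_ε Σ_Δ G_εᵀ = 0. Define Σ* = A⁻¹ Σ_Δ (A⁻¹)ᵀ and Σ^{(2)} = (A AᵀA)⁻¹ Σ_Δ (AᵀA Aᵀ)⁻¹. Then there exist constants ε₀ > 0 and C < ∞ such that ‖Σ^ε − Σ* − ε² Σ^{(2)}‖ ≤ C ε³ for all 0 < ε < ε₀; that is, Σ^ε = Σ* + ε²Σ^{(2)} + O(ε³) as ε ↓ 0. -/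

import Mathlib

open Matrix
set_option maxHeartbeats 2000000

attribute [local instance] Matrix.frobeniusNormedRing Matrix.frobeniusNormSMulClass

/-- `Aᵀ A` is Hermitian (over `ℝ`: symmetric). -/
theorem transpose_mul_self_isHermitian (d : ℕ) (A : Matrix (Fin d) (Fin d) ℝ) :
    (Aᵀ * A).IsHermitian := by
  simpa [Matrix.conjTranspose_eq_transpose_of_trivial] using
    Matrix.isHermitian_conjTranspose_mul_self A

lemma abs_entry_le_frobenius {d : ℕ} (X : Matrix (Fin d) (Fin d) ℝ) (i j : Fin d) :
    |X i j| ≤ ‖X‖ := by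
  rw [Matrix.frobenius_norm_def]
  have h0 : |X i j| = (|X i j| ^ (2:ℝ)) ^ (1/2 : ℝ) := by
    rw [← Real.rpow_mul (abs_nonneg _)]
    norm_num
  rw [h0]
  apply Real.rpow_le_rpow (Real.rpow_nonneg (abs_nonneg _) _) _ (by norm_num)
  have h1 : |X i j| ^ (2:ℝ) = ‖X i j‖ ^ (2:ℝ) := by rw [Real.norm_eq_abs]
  rw [h1]
  calc ‖X i j‖ ^ (2:ℝ) ≤ ∑ j', ‖X i j'‖ ^ (2:ℝ) :=
        Finset.single_le_sum (fun k _ => Real.rpow_nonneg (norm_nonneg _) _)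
          (Finset.mem_univ j)
    _ ≤ ∑ i', ∑ j', ‖X i' j'‖ ^ (2:ℝ) :=
        Finset.single_le_sum
          (fun k _ => Finset.sum_nonneg fun l _ => Real.rpow_nonneg (norm_nonneg _) _)
          (Finset.mem_univ i)

theorem stmt_17 (d : ℕ) (A : Matrix (Fin d) (Fin d) ℝ)
    (hHurwitz : ∀ μ : ℂ, μ ∈ spectrum ℂ (A.map (algebraMap ℝ ℂ)) → μ.re < 0)
    (Sd : Matrix (Fin d) (Fin d) ℝ) (hSd : Sd.PosSemidef)
    (Sig : ℝ → Matrix (Fin d) (Fin d) ℝ)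
    (hSig : ∀ ε : ℝ, 0 < ε →
      (∀ i : Fin d, ε < (transpose_mul_self_isHermitian d A).eigenvalues i) →
      ((2 : ℝ)⁻¹ • (1 : Matrix (Fin d) (Fin d) ℝ)
            + (-((ε • (1 : Matrix (Fin d) (Fin d) ℝ) + Aᵀ * A)⁻¹ * Aᵀ)) * A) * Sig ε
        + Sig ε * ((2 : ℝ)⁻¹ • (1 : Matrix (Fin d) (Fin d) ℝ)
            + (-((ε • (1 : Matrix (Fin d) (Fin d) ℝ) + Aᵀ * A)⁻¹ * Aᵀ)) * A)ᵀ
        + (-((ε • (1 : Matrix (Fin d) (Fin d) ℝ) + Aᵀ * A)⁻¹ * Aᵀ)) * Sd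
            * (-((ε • (1 : Matrix (Fin d) (Fin d) ℝ) + Aᵀ * A)⁻¹ * Aᵀ))ᵀ = 0) :
    ∃ ε₀ : ℝ, 0 < ε₀ ∧
      (∀ i : Fin d, ε₀ ≤ (transpose_mul_self_isHermitian d A).eigenvalues i) ∧
      ∃ C : ℝ, ∀ ε : ℝ, 0 < ε → ε < ε₀ → ∀ i j : Fin d,
        |(Sig ε - A⁻¹ * Sd * (A⁻¹)ᵀ
            - ε ^ 2 • ((A * Aᵀ * A)⁻¹ * Sd * (Aᵀ * A * Aᵀ)⁻¹)) i j| ≤ C * ε ^ 3 := by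
  rcases Nat.eq_zero_or_pos d with hd | hd
  · subst hd
    exact ⟨1, one_pos, fun i => i.elim0, 0, fun ε _ _ i j => i.elim0⟩
  have : NeZero d := ⟨hd.ne'⟩
  -- A is invertible
  have hAdet : IsUnit A.det := by
    by_contra h
    have hA0 : A.det = 0 := by simpa [isUnit_iff_ne_zero, not_not] using h
    have h0 : (A.map (algebraMap ℝ ℂ)).det = 0 := by
      have hmap := (algebraMap ℝ ℂ).map_det A
      rw [hA0, map_zero] at hmap
      simpa [RingHom.mapMatrix_apply] using hmap.symm
    have hnu : ¬ IsUnit (A.map (algebraMap ℝ ℂ)) := by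
      rw [Matrix.isUnit_iff_isUnit_det, h0]
      exact not_isUnit_zero
    have h0mem : (0 : ℂ) ∈ spectrum ℂ (A.map (algebraMap ℝ ℂ)) :=
      spectrum.zero_mem ℂ hnu
    simpa using hHurwitz 0 h0mem
  have hAunit : IsUnit A := (Matrix.isUnit_iff_isUnit_det A).mpr hAdet
  set S : Matrix (Fin d) (Fin d) ℝ := Aᵀ * A with hSdef
  -- S is positive semidefinite
  have hSpsd : S.PosSemidef := by
    simpa [Matrix.conjTranspose_eq_transpose_of_trivial] using
      Matrix.posSemidef_conjTranspose_mul_self A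
  -- S is positive definite
  have hSpd : S.PosDef := by
    refine Matrix.PosDef.of_dotProduct_mulVec_pos hSpsd.isHermitian fun x hx => ?_
    have hAx : A *ᵥ x ≠ 0 := by
      intro h
      apply hx
      have hinj : Function.Injective A.mulVec := Matrix.mulVec_injective_iff_isUnit.mpr hAunit
      have := hinj (h.trans (Matrix.mulVec_zero A).symm)
      exact this
    have : star x ⬝ᵥ (S *ᵥ x) = star (A *ᵥ x) ⬝ᵥ (A *ᵥ x) := by
      simp only [hSdef, star_trivial, ← Matrix.mulVec_mulVec, Matrix.dotProduct_mulVec,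
        Matrix.vecMul_transpose]
    rw [this]
    exact Matrix.dotProduct_star_self_pos_iff.mpr hAx
  have hSdetu : IsUnit S.det := hSpd.isUnit.map (Matrix.detMonoidHom)
  have hSsym : Sᵀ = S := by
    rw [← Matrix.conjTranspose_eq_transpose_of_trivial]
    exact hSpd.isHermitian
  have hiS : S⁻¹ * S = 1 := Matrix.nonsing_inv_mul S hSdetu
  have hAAi : A * A⁻¹ = 1 := Matrix.mul_nonsing_inv A hAdet
  have hAti : (A⁻¹)ᵀ * Aᵀ = 1 := by rw [← Matrix.transpose_mul, hAAi, Matrix.transpose_one]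
  set Sst : Matrix (Fin d) (Fin d) ℝ := A⁻¹ * Sd * (A⁻¹)ᵀ with hSstdef
  -- the eigenvalues are positive
  have hlampos : ∀ i : Fin d, 0 < (transpose_mul_self_isHermitian d A).eigenvalues i :=
    fun i => hSpd.eigenvalues_pos i
  set μ : ℝ := Finset.univ.inf' Finset.univ_nonempty
      ((transpose_mul_self_isHermitian d A).eigenvalues) with hμdef
  have hμpos : 0 < μ := by
    rw [hμdef, Finset.lt_inf'_iff]
    exact fun i _ => hlampos i
  have hμle : ∀ i : Fin d, μ ≤ (transpose_mul_self_isHermitian d A).eigenvalues i :=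
    fun i => Finset.inf'_le _ (Finset.mem_univ i)
  set n1 : ℝ := ‖S⁻¹‖ with hn1def
  have hn1 : 0 ≤ n1 := norm_nonneg _
  set nst : ℝ := ‖Sst‖ with hnstdef
  have hnst : 0 ≤ nst := norm_nonneg _
  set b : ℝ := 2*(n1+1) with hbdef
  have hbpos : 0 < b := by rw [hbdef]; positivity
  set C1 : ℝ := 2*(b*(n1*(nst*n1))) + n1*(b*(nst*b)) + n1*(nst*(n1*b)) with hC1def
  have hC1 : 0 ≤ C1 := by rw [hC1def]; positivity
  refine ⟨min μ (1/(8*(n1+1))), lt_min hμpos (by positivity), fun i => le_trans (min_le_left _ _) (hμle i), 2*C1, ?_⟩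
  intro ε hε hεlt
  have hεb : ε * (n1+1) ≤ 1/8 := by
    have h1 : ε ≤ 1/(8*(n1+1)) := le_of_lt (lt_of_lt_of_le hεlt (min_le_right _ _))
    rw [le_div_iff₀ (by positivity)] at h1
    nlinarith
  -- the matrix P and its inverse B
  set P : Matrix (Fin d) (Fin d) ℝ := ε • 1 + S with hPdef
  have hPpd : P.PosDef := by
    rw [hPdef]
    refine Matrix.PosDef.add_posSemidef ?_ hSpsd
    rw [Matrix.smul_one_eq_diagonal]
    exact Matrix.posDef_diagonal_iff.mpr fun i => hε
  have hPdet : IsUnit P.det := hPpd.isUnit.map (Matrix.detMonoidHom)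
  set B : Matrix (Fin d) (Fin d) ℝ := P⁻¹ with hBdef
  have hBP : B * P = 1 := Matrix.nonsing_inv_mul P hPdet
  have hPB : P * B = 1 := Matrix.mul_nonsing_inv P hPdet
  have hPt : Pᵀ = P := by rw [hPdef, Matrix.transpose_add, Matrix.transpose_smul, Matrix.transpose_one, hSsym]
  have hBt : Bᵀ = B := by rw [hBdef, Matrix.transpose_nonsing_inv, hPt]
  have hS' : S = P - ε • (1 : Matrix (Fin d) (Fin d) ℝ) := by rw [hPdef]; abel
  have hBS : B * S = 1 - ε • B := by
    rw [hS', mul_sub, hBP, mul_smul_comm, mul_one]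
  have hSB : S * B = 1 - ε • B := by
    rw [hS', sub_mul, hPB, smul_mul_assoc, one_mul]
  have hBsub : B = S⁻¹ - ε • (S⁻¹ * B) := by
    have h := congrArg (fun X => S⁻¹ * X) hSB
    simp only [← mul_assoc, hiS, one_mul, mul_sub, mul_one, mul_smul_comm] at h
    exact h
  have hkey : B + ε • (S⁻¹ * B) = S⁻¹ := (sub_eq_iff_eq_add.mp hBsub.symm).symm
  -- the Lyapunov equation, massaged
  have eq0 := hSig ε hε (fun i => lt_of_lt_of_le hεlt (le_trans (min_le_left _ _) (hμle i)))
  rw [← hSdef, ← hPdef, ← hBdef] at eq0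
  have hM : (2 : ℝ)⁻¹ • (1 : Matrix (Fin d) (Fin d) ℝ) + (-(B * Aᵀ)) * A
      = ε • B - (2 : ℝ)⁻¹ • 1 := by
    have h1 : (-(B * Aᵀ)) * A = ε • B - 1 := by
      rw [neg_mul, mul_assoc, ← hSdef, hBS, neg_sub]
    rw [h1]
    module
  have hMT : ((2 : ℝ)⁻¹ • (1 : Matrix (Fin d) (Fin d) ℝ) + (-(B * Aᵀ)) * A)ᵀ
      = ε • B - (2 : ℝ)⁻¹ • 1 := by
    rw [hM, Matrix.transpose_sub, Matrix.transpose_smul, Matrix.transpose_smul,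
      Matrix.transpose_one, hBt]
  have hASA : ∀ X : Matrix (Fin d) (Fin d) ℝ, S * (Sst * (S * X)) = Aᵀ * (Sd * (A * X)) := by
    intro X
    simp only [hSstdef, hSdef, mul_assoc]
    rw [← mul_assoc A A⁻¹, hAAi, one_mul, ← mul_assoc (A⁻¹)ᵀ Aᵀ, hAti, one_mul]
  have hG : (-(B * Aᵀ)) * Sd * (-(B * Aᵀ))ᵀ = (1 - ε • B) * (Sst * (1 - ε • B)) := by
    simp only [Matrix.transpose_neg, Matrix.transpose_mul, Matrix.transpose_transpose, hBt,
      neg_mul, mul_neg, neg_neg]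
    nth_rewrite 1 [← hBS]
    nth_rewrite 1 [← hSB]
    simp only [mul_assoc]
    rw [hASA B]
  have eq1 : Sig ε - ε • (B * Sig ε + Sig ε * B) = (1 - ε • B) * (Sst * (1 - ε • B)) := by
    rw [hMT, hM, hG] at eq0
    have hexp : (ε • B - (2:ℝ)⁻¹ • 1) * Sig ε + Sig ε * (ε • B - (2:ℝ)⁻¹ • 1)
        = ε • (B * Sig ε + Sig ε * B) - Sig ε := by
      simp only [sub_mul, mul_sub, smul_mul_assoc, mul_smul_comm, one_mul, mul_one, smul_add]
      module
    rw [hexp] at eq0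
    rw [← sub_eq_zero]
    calc Sig ε - ε • (B * Sig ε + Sig ε * B) - (1 - ε • B) * (Sst * (1 - ε • B))
        = -((ε • (B * Sig ε + Sig ε * B) - Sig ε) + (1 - ε • B) * (Sst * (1 - ε • B))) := by
          abel
      _ = 0 := by rw [eq0, neg_zero]
  -- key algebraic identity
  have g : B * (Sst * B) + ε • (S⁻¹ * (B * (Sst * B))) + ε • (S⁻¹ * (Sst * (S⁻¹ * B)))
      = S⁻¹ * (Sst * S⁻¹) := by
    have h5 : B * (Sst * B) + ε • (S⁻¹ * (B * (Sst * B))) = S⁻¹ * (Sst * B) := by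
      calc B * (Sst * B) + ε • (S⁻¹ * (B * (Sst * B)))
          = (B + ε • (S⁻¹ * B)) * (Sst * B) := by
            simp only [add_mul, smul_mul_assoc, mul_assoc]
        _ = S⁻¹ * (Sst * B) := by rw [hkey]
    rw [h5]
    calc S⁻¹ * (Sst * B) + ε • (S⁻¹ * (Sst * (S⁻¹ * B)))
        = S⁻¹ * (Sst * (B + ε • (S⁻¹ * B))) := by
          simp only [mul_add, mul_smul_comm, smul_add]
      _ = S⁻¹ * (Sst * S⁻¹) := by rw [hkey]
  set T : Matrix (Fin d) (Fin d) ℝ := Sst + ε^2 • (S⁻¹ * (Sst * S⁻¹)) with hTdef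
  set R0 : Matrix (Fin d) (Fin d) ℝ :=
    B * (S⁻¹ * (Sst * S⁻¹)) + (S⁻¹ * (Sst * S⁻¹)) * B
      - S⁻¹ * (B * (Sst * B)) - S⁻¹ * (Sst * (S⁻¹ * B)) with hR0def
  have hD : (T - ε • (B * T + T * B)) - ((1 - ε • B) * (Sst * (1 - ε • B)) - ε^3 • R0)
      = ε^2 • (S⁻¹ * (Sst * S⁻¹)
          - (B * (Sst * B) + ε • (S⁻¹ * (B * (Sst * B))) + ε • (S⁻¹ * (Sst * (S⁻¹ * B))))) := by
    rw [hTdef, hR0def]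
    simp only [mul_add, add_mul, mul_sub, sub_mul, smul_mul_assoc, mul_smul_comm,
      one_mul, mul_one, mul_assoc, smul_add, smul_sub, smul_smul]
    module
  have eq2 : T - ε • (B * T + T * B) = (1 - ε • B) * (Sst * (1 - ε • B)) - ε^3 • R0 := by
    rw [← sub_eq_zero, hD, g, sub_self, smul_zero]
  have eq3 : (Sig ε - T) - ε • (B * (Sig ε - T) + (Sig ε - T) * B) = ε^3 • R0 := by
    have hlin : (Sig ε - T) - ε • (B * (Sig ε - T) + (Sig ε - T) * B)
        = (Sig ε - ε • (B * Sig ε + Sig ε * B)) - (T - ε • (B * T + T * B)) := by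
      simp only [mul_sub, sub_mul, smul_add, smul_sub]
      abel
    rw [hlin, eq1, eq2]
    abel
  -- norm bounds
  have hBnorm : ‖B‖ ≤ b := by
    have h1 : ‖B‖ ≤ n1 + ε * (n1 * ‖B‖) := by
      calc ‖B‖ = ‖S⁻¹ - ε • (S⁻¹ * B)‖ := by conv_lhs => rw [hBsub]
        _ ≤ ‖S⁻¹‖ + ‖ε • (S⁻¹ * B)‖ := norm_sub_le _ _
        _ = n1 + |ε| * ‖S⁻¹ * B‖ := by rw [norm_smul, Real.norm_eq_abs, hn1def]
        _ ≤ n1 + ε * (n1 * ‖B‖) := by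
            rw [abs_of_pos hε]
            exact (add_le_add_iff_left n1).mpr (mul_le_mul_of_nonneg_left (norm_mul_le _ _) (le_of_lt hε))
    rw [hbdef]
    nlinarith [norm_nonneg B, mul_le_mul_of_nonneg_right hεb (norm_nonneg B)]
  have hXn : ‖S⁻¹ * (Sst * S⁻¹)‖ ≤ n1 * (nst * n1) :=
    calc ‖S⁻¹ * (Sst * S⁻¹)‖ ≤ ‖S⁻¹‖ * ‖Sst * S⁻¹‖ := norm_mul_le _ _
      _ ≤ n1 * (nst * n1) := by
          refine mul_le_mul_of_nonneg_left ?_ hn1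
          calc ‖Sst * S⁻¹‖ ≤ ‖Sst‖ * ‖S⁻¹‖ := norm_mul_le _ _
            _ = nst * n1 := rfl
  have hR0norm : ‖R0‖ ≤ C1 := by
    have t1 : ‖B * (S⁻¹ * (Sst * S⁻¹))‖ ≤ b * (n1 * (nst * n1)) :=
      le_trans (norm_mul_le _ _) (mul_le_mul hBnorm hXn (norm_nonneg _) (le_of_lt hbpos))
    have t2 : ‖(S⁻¹ * (Sst * S⁻¹)) * B‖ ≤ (n1 * (nst * n1)) * b :=
      le_trans (norm_mul_le _ _)
        (mul_le_mul hXn hBnorm (norm_nonneg _) (by positivity))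
    have hSstB : ‖Sst * B‖ ≤ nst * b :=
      le_trans (norm_mul_le _ _) (mul_le_mul_of_nonneg_left hBnorm hnst)
    have t3 : ‖S⁻¹ * (B * (Sst * B))‖ ≤ n1 * (b * (nst * b)) := by
      refine le_trans (norm_mul_le _ _) (mul_le_mul_of_nonneg_left ?_ hn1)
      exact le_trans (norm_mul_le _ _)
        (mul_le_mul hBnorm hSstB (norm_nonneg _) (le_of_lt hbpos))
    have t4 : ‖S⁻¹ * (Sst * (S⁻¹ * B))‖ ≤ n1 * (nst * (n1 * b)) := by
      refine le_trans (norm_mul_le _ _) (mul_le_mul_of_nonneg_left ?_ hn1)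
      refine le_trans (norm_mul_le _ _) (mul_le_mul_of_nonneg_left ?_ hnst)
      exact le_trans (norm_mul_le _ _)
        (mul_le_mul_of_nonneg_left hBnorm hn1)
    calc ‖R0‖ ≤ ‖B * (S⁻¹ * (Sst * S⁻¹)) + (S⁻¹ * (Sst * S⁻¹)) * B - S⁻¹ * (B * (Sst * B))‖
          + ‖S⁻¹ * (Sst * (S⁻¹ * B))‖ := by rw [hR0def]; exact norm_sub_le _ _
      _ ≤ (‖B * (S⁻¹ * (Sst * S⁻¹)) + (S⁻¹ * (Sst * S⁻¹)) * B‖ + ‖S⁻¹ * (B * (Sst * B))‖)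
          + ‖S⁻¹ * (Sst * (S⁻¹ * B))‖ := by
            gcongr
            exact norm_sub_le _ _
      _ ≤ ((‖B * (S⁻¹ * (Sst * S⁻¹))‖ + ‖(S⁻¹ * (Sst * S⁻¹)) * B‖) + ‖S⁻¹ * (B * (Sst * B))‖)
          + ‖S⁻¹ * (Sst * (S⁻¹ * B))‖ := by
            gcongr
            exact norm_add_le _ _
      _ ≤ C1 := by rw [hC1def]; nlinarith [t1, t2, t3, t4]
  have hErep : Sig ε - T = ε^3 • R0 + ε • (B * (Sig ε - T) + (Sig ε - T) * B) :=
    sub_eq_iff_eq_add.mp eq3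
  have hEnorm : ‖Sig ε - T‖ ≤ 2*C1*ε^3 := by
    have h2 : ‖Sig ε - T‖ ≤ ε^3 * C1 + ε * (2 * b * ‖Sig ε - T‖) := by
      calc ‖Sig ε - T‖ = ‖ε^3 • R0 + ε • (B * (Sig ε - T) + (Sig ε - T) * B)‖ := by
            conv_lhs => rw [hErep]
        _ ≤ ‖ε^3 • R0‖ + ‖ε • (B * (Sig ε - T) + (Sig ε - T) * B)‖ := norm_add_le _ _
        _ = |ε^3| * ‖R0‖ + |ε| * ‖B * (Sig ε - T) + (Sig ε - T) * B‖ := by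
            rw [norm_smul, norm_smul, Real.norm_eq_abs, Real.norm_eq_abs]
        _ ≤ ε^3 * C1 + ε * (2 * b * ‖Sig ε - T‖) := by
            rw [abs_of_pos hε, abs_of_pos (by positivity : (0:ℝ) < ε^3)]
            refine add_le_add (mul_le_mul_of_nonneg_left hR0norm (by positivity)) ?_
            refine mul_le_mul_of_nonneg_left ?_ (le_of_lt hε)
            calc ‖B * (Sig ε - T) + (Sig ε - T) * B‖
                ≤ ‖B * (Sig ε - T)‖ + ‖(Sig ε - T) * B‖ := norm_add_le _ _
              _ ≤ ‖B‖ * ‖Sig ε - T‖ + ‖Sig ε - T‖ * ‖B‖ :=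
                  add_le_add (norm_mul_le _ _) (norm_mul_le _ _)
              _ ≤ 2 * b * ‖Sig ε - T‖ := by
                  nlinarith [norm_nonneg (Sig ε - T), norm_nonneg B, hBnorm]
    have h3 : ε * (2 * b * ‖Sig ε - T‖) ≤ (1/2) * ‖Sig ε - T‖ := by
      rw [hbdef] at *
      nlinarith [norm_nonneg (Sig ε - T), mul_le_mul_of_nonneg_right hεb (norm_nonneg (Sig ε - T))]
    nlinarith [h2, h3]
  -- conclusion
  intro i j
  have hS2 : (A * Aᵀ * A)⁻¹ * Sd * (S * Aᵀ)⁻¹ = S⁻¹ * (Sst * S⁻¹) := by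
    simp only [hSstdef, hSdef, Matrix.mul_inv_rev, Matrix.transpose_nonsing_inv, mul_assoc]
  have hfold : Sig ε - Sst - ε ^ 2 • ((A * Aᵀ * A)⁻¹ * Sd * (S * Aᵀ)⁻¹) = Sig ε - T := by
    rw [hS2, hTdef]; abel
  rw [hfold]
  calc |(Sig ε - T) i j| ≤ ‖Sig ε - T‖ := abs_entry_le_frobenius _ i j
    _ ≤ 2*C1*ε^3 := hEnorm
    _ = 2*C1 * ε^3 := by ring
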